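/- In the extended Schrödinger-Virasoro algebra sv~, for all m₁,...,m_t ∈ ℤ and b_{m₁},...,b_{m_t} ∈ ℂ: exp(b_{m₁} ad Y_{m₁+1/2}) ∘ ⋯ ∘ exp(b_{m_t} ad Y_{m_t+1/2}) = exp(Σ_k b_{m_k} ad Y_{m_k+1/2}) ∘ exp(Σ_{1≤i<j≤t} ((m_i−m_j)/2) b_{m_i} b_{m_j} ad M_{m_i+m_j+1}). -/

import Mathlib

/-- Index type for the basis of the extended Schrödinger-Virasoro Lie algebra.
`Y n` stands for the generator `Y_{n+1/2}`. -/
inductive SVIdx : Type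
  | L : ℤ → SVIdx
  | M : ℤ → SVIdx
  | N : ℤ → SVIdx
  | Y : ℤ → SVIdx

/-- A complex Lie algebra `g` is (a copy of) the extended Schrödinger-Virasoro
Lie algebra if it has a basis indexed by `SVIdx` whose brackets are given by the
structure constants of `sv~`. -/
structure ExtSV (g : Type*) [LieRing g] [LieAlgebra ℂ g] where
  b : Module.Basis SVIdx ℂ g
  LL : ∀ m n : ℤ, ⁅b (SVIdx.L m), b (SVIdx.L n)⁆ = ((n : ℂ) - (m : ℂ)) • b (SVIdx.L (m + n))
  MM : ∀ m n : ℤ, ⁅b (SVIdx.M m), b (SVIdx.M n)⁆ = 0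
  NN : ∀ m n : ℤ, ⁅b (SVIdx.N m), b (SVIdx.N n)⁆ = 0
  YY : ∀ m n : ℤ, ⁅b (SVIdx.Y m), b (SVIdx.Y n)⁆ = ((m : ℂ) - (n : ℂ)) • b (SVIdx.M (m + n + 1))
  LM : ∀ m n : ℤ, ⁅b (SVIdx.L m), b (SVIdx.M n)⁆ = (n : ℂ) • b (SVIdx.M (m + n))
  LN : ∀ m n : ℤ, ⁅b (SVIdx.L m), b (SVIdx.N n)⁆ = (n : ℂ) • b (SVIdx.N (m + n))
  LY : ∀ m n : ℤ, ⁅b (SVIdx.L m), b (SVIdx.Y n)⁆ =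
      ((n : ℂ) + (1 - (m : ℂ)) / 2) • b (SVIdx.Y (m + n))
  NM : ∀ m n : ℤ, ⁅b (SVIdx.N m), b (SVIdx.M n)⁆ = (2 : ℂ) • b (SVIdx.M (m + n))
  NY : ∀ m n : ℤ, ⁅b (SVIdx.N m), b (SVIdx.Y n)⁆ = b (SVIdx.Y (m + n))
  MY : ∀ m n : ℤ, ⁅b (SVIdx.M m), b (SVIdx.Y n)⁆ = 0

/-- Truncated exponential `exp(A) = 1 + A + A²/2`, valid for operators with `A³ = 0`. -/
noncomputable def truncExp {g : Type*} [LieRing g] [LieAlgebra ℂ g]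
    (A : Module.End ℂ g) : Module.End ℂ g :=
  1 + A + ((2 : ℂ)⁻¹) • A ^ 2

namespace ExtSVAux

open LieAlgebra

attribute [local instance 100] LieRing.ofAssociativeRing

variable {g : Type*} [LieRing g] [LieAlgebra ℂ g] (h : ExtSV g)

noncomputable def AY (p : ℤ) : Module.End ℂ g := ad ℂ g (h.b (SVIdx.Y p))
noncomputable def AM (p : ℤ) : Module.End ℂ g := ad ℂ g (h.b (SVIdx.M p))

lemma bYL (p n : ℤ) : ⁅h.b (SVIdx.Y p), h.b (SVIdx.L n)⁆
    = -(((p:ℂ) + (1 - (n:ℂ)) / 2) • h.b (SVIdx.Y (n + p))) := by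
  rw [← lie_skew, h.LY]

lemma bYM (p n : ℤ) : ⁅h.b (SVIdx.Y p), h.b (SVIdx.M n)⁆ = 0 := by
  rw [← lie_skew, h.MY, neg_zero]

lemma bYN (p n : ℤ) : ⁅h.b (SVIdx.Y p), h.b (SVIdx.N n)⁆ = -(h.b (SVIdx.Y (n + p))) := by
  rw [← lie_skew, h.NY]

lemma bML (p n : ℤ) : ⁅h.b (SVIdx.M p), h.b (SVIdx.L n)⁆
    = -((p:ℂ) • h.b (SVIdx.M (n + p))) := by
  rw [← lie_skew, h.LM]

lemma bMN (p n : ℤ) : ⁅h.b (SVIdx.M p), h.b (SVIdx.N n)⁆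
    = -((2:ℂ) • h.b (SVIdx.M (n + p))) := by
  rw [← lie_skew, h.NM]

lemma MmulM (p q : ℤ) : AM h p * AM h q = 0 := by
  apply h.b.ext
  rintro (n | n | n | n) <;>
    simp [AM, Module.End.mul_apply, ad_apply, h.MM, h.MY, bML h, bMN h, lie_smul]

lemma MmulY (p q : ℤ) : AM h p * AY h q = 0 := by
  apply h.b.ext
  rintro (n | n | n | n) <;>
    simp [AM, AY, Module.End.mul_apply, ad_apply, h.MM, h.MY, bML h, bMN h, bYL h, bYM h,
      bYN h, h.YY, h.LY, h.NY, lie_smul]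

lemma YmulM (p q : ℤ) : AY h p * AM h q = 0 := by
  apply h.b.ext
  rintro (n | n | n | n) <;>
    simp [AM, AY, Module.End.mul_apply, ad_apply, h.MM, h.MY, bML h, bMN h, bYM h, h.LM,
      h.NM, lie_smul]

lemma YYY (p q r : ℤ) : AY h p * AY h q * AY h r = 0 := by
  apply h.b.ext
  rintro (n | n | n | n) <;>
    simp [AY, Module.End.mul_apply, ad_apply, bYL h, bYM h, bYN h, h.YY, h.LY, h.NY, lie_smul]

lemma Ycomm (p q : ℤ) : AY h p * AY h q - AY h q * AY h p
    = ((p:ℂ) - (q:ℂ)) • AM h (p + q + 1) := by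
  have := LieHom.map_lie (ad ℂ g) (h.b (SVIdx.Y p)) (h.b (SVIdx.Y q))
  rw [h.YY] at this
  rw [← Ring.lie_def]
  simp only [AY, AM]
  rw [← this]
  simp

lemma truncExp_mul (x s : Module.End ℂ g) (h1 : x*(s*s) = 0) (h2 : x*(x*s) = 0) :
    truncExp x * truncExp s = truncExp (x+s) + (2⁻¹:ℂ) • (x*s - s*x) := by
  have h3 : x*(x*(s*s)) = 0 := by rw [h1, mul_zero]
  simp only [truncExp, pow_two, mul_add, add_mul, mul_one, one_mul,
    mul_smul_comm, smul_mul_assoc, smul_smul, smul_add, mul_assoc, h1, h2, h3,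
    mul_zero, zero_mul, smul_zero, add_zero, zero_add]
  module

lemma truncExp_mul_right (x B : Module.End ℂ g) (hxB : x * B = 0) :
    truncExp x * B = B := by
  simp [truncExp, pow_two, add_mul, smul_mul_assoc, mul_assoc, hxB]

lemma truncExp_mul_truncExp_right (S B : Module.End ℂ g) (hSB : S*B = 0) (hBB : B*B = 0) :
    truncExp S * truncExp B = truncExp S + B := by
  have h3 : S*(S*B) = 0 := by rw [hSB, mul_zero]
  simp only [truncExp, pow_two, mul_add, add_mul, mul_one, one_mul,
    mul_smul_comm, smul_mul_assoc, smul_smul, smul_add, mul_assoc, hSB, hBB, h3,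
    mul_zero, zero_mul, smul_zero, add_zero, zero_add]

section sums

variable {t : ℕ} (m : Fin t → ℤ) (bc : Fin t → ℂ)

lemma yyS (a b : ℤ) :
    AY h a * (AY h b * (∑ k : Fin t, bc k • AY h (m k))) = 0 := by
  simp only [Finset.mul_sum, mul_smul_comm, ← mul_assoc, YYY, smul_zero,
    Finset.sum_const_zero]

lemma ySS (a : ℤ) :
    AY h a * ((∑ k : Fin t, bc k • AY h (m k)) * (∑ k : Fin t, bc k • AY h (m k))) = 0 := by
  simp only [Finset.sum_mul, Finset.mul_sum, smul_mul_assoc, mul_smul_comm, ← mul_assoc,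
    YYY, smul_zero, Finset.sum_const_zero]

lemma yB (a : ℤ) :
    AY h a * (∑ i : Fin t, ∑ j : Fin t,
      if i < j then (((m i : ℂ) - (m j : ℂ)) / 2 * bc i * bc j) • AM h (m i + m j + 1)
      else 0) = 0 := by
  simp only [Finset.mul_sum, mul_ite, mul_zero, mul_smul_comm, YmulM, smul_zero,
    ite_self, Finset.sum_const_zero]

lemma SB :
    (∑ k : Fin t, bc k • AY h (m k)) * (∑ i : Fin t, ∑ j : Fin t,
      if i < j then (((m i : ℂ) - (m j : ℂ)) / 2 * bc i * bc j) • AM h (m i + m j + 1)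
      else 0) = 0 := by
  rw [Finset.sum_mul]
  refine Finset.sum_eq_zero fun k _ => ?_
  rw [smul_mul_assoc, yB h m bc, smul_zero]

lemma BB :
    (∑ i : Fin t, ∑ j : Fin t,
      if i < j then (((m i : ℂ) - (m j : ℂ)) / 2 * bc i * bc j) • AM h (m i + m j + 1)
      else 0) * (∑ i : Fin t, ∑ j : Fin t,
      if i < j then (((m i : ℂ) - (m j : ℂ)) / 2 * bc i * bc j) • AM h (m i + m j + 1)
      else 0) = 0 := by
  simp only [Finset.sum_mul, Finset.mul_sum, ite_mul, mul_ite, zero_mul, mul_zero,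
    smul_mul_assoc, mul_smul_comm, MmulM, smul_zero, ite_self, Finset.sum_const_zero]

end sums

lemma key : ∀ (t : ℕ) (m : Fin t → ℤ) (bc : Fin t → ℂ),
    (List.ofFn fun k : Fin t => truncExp (bc k • AY h (m k))).prod
      = truncExp (∑ k : Fin t, bc k • AY h (m k)) +
        ∑ i : Fin t, ∑ j : Fin t,
          if i < j then (((m i : ℂ) - (m j : ℂ)) / 2 * bc i * bc j) • AM h (m i + m j + 1)
          else 0 := by
  intro t
  induction t with
  | zero => intro m bc; simp [truncExp]
  | succ t ih =>
    intro m bc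
    rw [List.ofFn_succ, List.prod_cons]
    rw [show (List.ofFn fun k : Fin t => truncExp (bc k.succ • AY h (m k.succ)))
        = List.ofFn fun k : Fin t =>
            truncExp ((bc ∘ Fin.succ) k • AY h ((m ∘ Fin.succ) k)) from rfl,
      ih (m ∘ Fin.succ) (bc ∘ Fin.succ)]
    set x := bc 0 • AY h (m 0) with hx
    set s := ∑ k : Fin t, (bc ∘ Fin.succ) k • AY h ((m ∘ Fin.succ) k) with hs
    set B' := ∑ i : Fin t, ∑ j : Fin t,
      if i < j then
        ((((m ∘ Fin.succ) i : ℂ) - ((m ∘ Fin.succ) j : ℂ)) / 2 * (bc ∘ Fin.succ) i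
          * (bc ∘ Fin.succ) j) • AM h ((m ∘ Fin.succ) i + (m ∘ Fin.succ) j + 1)
      else 0 with hB'
    have hxss : x*(s*s) = 0 := by
      rw [hx, smul_mul_assoc, hs, ySS h, smul_zero]
    have hxxs : x*(x*s) = 0 := by
      rw [hx, hs]
      simp only [smul_mul_assoc, mul_smul_comm, yyS h, smul_zero]
    have hxB : x * B' = 0 := by
      rw [hx, hB', smul_mul_assoc, yB h, smul_zero]
    rw [mul_add, truncExp_mul x s hxss hxxs, truncExp_mul_right x B' hxB]
    have cross : (2⁻¹:ℂ) • (x*s - s*x)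
        = ∑ k : Fin t, (((m 0 : ℂ) - (m k.succ : ℂ)) / 2 * bc 0 * bc k.succ) •
            AM h (m 0 + m k.succ + 1) := by
      rw [hx, hs, Finset.mul_sum, Finset.sum_mul, ← Finset.sum_sub_distrib, Finset.smul_sum]
      refine Finset.sum_congr rfl fun k _ => ?_
      rw [smul_mul_smul_comm, smul_mul_smul_comm, mul_comm ((bc ∘ Fin.succ) k) (bc 0),
        ← smul_sub, Ycomm h, smul_smul, smul_smul]
      simp only [Function.comp_apply]
      congr 1
      ring
    have hsum : x + s = ∑ k : Fin (t+1), bc k • AY h (m k) := by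
      rw [Fin.sum_univ_succ]; rfl
    have hBsum : (∑ i : Fin (t+1), ∑ j : Fin (t+1),
          if i < j then (((m i : ℂ) - (m j : ℂ)) / 2 * bc i * bc j) • AM h (m i + m j + 1)
          else 0)
        = (∑ k : Fin t, (((m 0 : ℂ) - (m k.succ : ℂ)) / 2 * bc 0 * bc k.succ) •
            AM h (m 0 + m k.succ + 1)) + B' := by
      rw [hB']
      rw [Fin.sum_univ_succ]
      congr 1
      · rw [Fin.sum_univ_succ]
        simp [Fin.succ_pos]
      · refine Finset.sum_congr rfl fun i _ => ?_
        rw [Fin.sum_univ_succ]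
        simp [Fin.succ_lt_succ_iff]
    rw [cross, hsum, hBsum]
    abel

end ExtSVAux

open LieAlgebra in
/-- In `sv~`:
`exp(b₁ ad Y_{m₁+1/2}) ∘ ⋯ ∘ exp(b_t ad Y_{m_t+1/2})
  = exp(Σ_k b_k ad Y_{m_k+1/2}) ∘ exp(Σ_{i<j} ((m_i−m_j)/2) b_i b_j ad M_{m_i+m_j+1})`. -/
theorem extSV_exp_product {g : Type*} [LieRing g] [LieAlgebra ℂ g] (h : ExtSV g)
    (t : ℕ) (m : Fin t → ℤ) (bc : Fin t → ℂ) :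
    (List.ofFn fun k : Fin t =>
        truncExp (bc k • ad ℂ g (h.b (SVIdx.Y (m k))))).prod =
      truncExp (∑ k : Fin t, bc k • ad ℂ g (h.b (SVIdx.Y (m k)))) *
        truncExp (∑ i : Fin t, ∑ j : Fin t,
          if i < j then
            ((((m i : ℂ) - (m j : ℂ)) / 2) * bc i * bc j) •
              ad ℂ g (h.b (SVIdx.M (m i + m j + 1)))
          else 0) := by
  show (List.ofFn fun k : Fin t => truncExp (bc k • ExtSVAux.AY h (m k))).prod
      = truncExp (∑ k : Fin t, bc k • ExtSVAux.AY h (m k)) *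
        truncExp (∑ i : Fin t, ∑ j : Fin t,
          if i < j then (((m i : ℂ) - (m j : ℂ)) / 2 * bc i * bc j) • ExtSVAux.AM h (m i + m j + 1)
          else 0)
  rw [ExtSVAux.truncExp_mul_truncExp_right _ _ (ExtSVAux.SB h m bc) (ExtSVAux.BB h m bc)]
  exact ExtSVAux.key h t m bc
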